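/- Let (Ω, F, P) be a probability space, let σ : ℝ → ℝ be the logistic function, fix θ ∈ ℝᵈ, c ≥ 0, and a sequence of random vectors θ̂ₙ : Ω → ℝᵈ converging to θ in probability. Suppose for each n we have real-valued random variables Êₙ and Eₙ together with a nonempty finite index set Sₙ with parameters ‖αᵢ‖₂ ≤ c and βᵢ ∈ ℝ, such that almost surely |Êₙ − Eₙ| ≤ (1/|Sₙ|) · Σ_{i ∈ Sₙ} |σ(⟪θ̂ₙ, αᵢ⟫ − βᵢ) − σ(⟪θ, αᵢ⟫ − βᵢ)|. Then |Êₙ − Eₙ| → 0 in probability as n → ∞. -/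

import Mathlib

open scoped RealInnerProductSpace
open MeasureTheory Filter

lemma logistic_lipschitz_aux (a b : ℝ) :
    |(fun t : ℝ => 1 / (1 + Real.exp (-t))) a -
      (fun t : ℝ => 1 / (1 + Real.exp (-t))) b| ≤ |a - b| := by
  set f : ℝ → ℝ := fun t => 1 / (1 + Real.exp (-t))
  have hderiv : ∀ t : ℝ, HasDerivAt f (Real.exp (-t) / (1 + Real.exp (-t)) ^ 2) t := by
    intro t
    have h1 : HasDerivAt (fun t : ℝ => 1 + Real.exp (-t)) (-Real.exp (-t)) t := by
      simpa using ((Real.hasDerivAt_exp (-t)).comp t (hasDerivAt_neg t)).const_add 1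
    have hne : (1 + Real.exp (-t)) ≠ 0 := by positivity
    have h2 := h1.fun_inv hne
    simpa [f, one_div, neg_neg] using h2
  have hbound : ∀ t : ℝ, ‖Real.exp (-t) / (1 + Real.exp (-t)) ^ 2‖ ≤ 1 := by
    intro t
    have he := Real.exp_pos (-t)
    rw [Real.norm_eq_abs, abs_of_nonneg (by positivity), div_le_one (by positivity)]
    nlinarith
  have := Convex.norm_image_sub_le_of_norm_hasDerivWithin_le
    (f := f) (f' := fun t => Real.exp (-t) / (1 + Real.exp (-t)) ^ 2)
    (fun x _ => (hderiv x).hasDerivWithinAt)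
    (fun x _ => hbound x) convex_univ (Set.mem_univ b) (Set.mem_univ a)
  simpa [Real.norm_eq_abs] using this

/-- If `θ̂ₙ → θ` in probability and, for each `n`, the random variables `Êₙ` and `Eₙ`
satisfy almost surely `|Êₙ − Eₙ| ≤ (1/|Sₙ|) Σ_{i∈Sₙ} |σ(⟪θ̂ₙ,αᵢ⟫−βᵢ) − σ(⟪θ,αᵢ⟫−βᵢ)|`
for a nonempty finite index set `Sₙ` with `‖αᵢ‖ ≤ c`, then `|Êₙ − Eₙ| → 0` in
probability. -/
theorem pIRT_estimator_consistent
    {Ω : Type*} [MeasurableSpace Ω] (P : Measure Ω) [IsProbabilityMeasure P]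
    (σ : ℝ → ℝ) (hσ : σ = fun t : ℝ => 1 / (1 + Real.exp (-t)))
    (d : ℕ) (θ : EuclideanSpace ℝ (Fin d)) (c : ℝ) (hc : 0 ≤ c)
    (θhat : ℕ → Ω → EuclideanSpace ℝ (Fin d))
    (hconv : TendstoInMeasure P θhat atTop (fun _ => θ))
    (Ehat E : ℕ → Ω → ℝ)
    {ι : Type*} (S : ℕ → Finset ι) (hS : ∀ n, (S n).Nonempty)
    (α : ℕ → ι → EuclideanSpace ℝ (Fin d)) (β : ℕ → ι → ℝ)
    (hα : ∀ n, ∀ i ∈ S n, ‖α n i‖ ≤ c)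
    (hdom : ∀ n : ℕ, ∀ᵐ ω ∂P,
      |Ehat n ω - E n ω| ≤ (1 / ((S n).card : ℝ)) *
        ∑ i ∈ S n, |σ (⟪θhat n ω, α n i⟫ - β n i) - σ (⟪θ, α n i⟫ - β n i)|) :
    TendstoInMeasure P (fun (n : ℕ) (ω : Ω) => |Ehat n ω - E n ω|)
      atTop (fun _ => (0 : ℝ)) := by
  have hlip : ∀ a b : ℝ, |σ a - σ b| ≤ |a - b| := by
    intro a b; rw [hσ]; exact logistic_lipschitz_aux a b
  -- a.s. domination by c * ‖θ̂ₙ ω - θ‖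
  have key : ∀ n : ℕ, ∀ᵐ ω ∂P, |Ehat n ω - E n ω| ≤ c * ‖θhat n ω - θ‖ := by
    intro n
    filter_upwards [hdom n] with ω hω
    have hcard : (0 : ℝ) < ((S n).card : ℝ) := by
      exact_mod_cast Finset.card_pos.mpr (hS n)
    have hterm : ∀ i ∈ S n,
        |σ (⟪θhat n ω, α n i⟫ - β n i) - σ (⟪θ, α n i⟫ - β n i)|
          ≤ c * ‖θhat n ω - θ‖ := by
      intro i hi
      calc |σ (⟪θhat n ω, α n i⟫ - β n i) - σ (⟪θ, α n i⟫ - β n i)|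
          ≤ |(⟪θhat n ω, α n i⟫ - β n i) - (⟪θ, α n i⟫ - β n i)| := hlip _ _
        _ = |⟪θhat n ω - θ, α n i⟫| := by rw [inner_sub_left]; ring_nf
        _ ≤ ‖θhat n ω - θ‖ * ‖α n i‖ := abs_real_inner_le_norm _ _
        _ ≤ ‖θhat n ω - θ‖ * c := by
            exact mul_le_mul_of_nonneg_left (hα n i hi) (norm_nonneg _)
        _ = c * ‖θhat n ω - θ‖ := mul_comm _ _
    calc |Ehat n ω - E n ω|
        ≤ (1 / ((S n).card : ℝ)) *
          ∑ i ∈ S n, |σ (⟪θhat n ω, α n i⟫ - β n i) - σ (⟪θ, α n i⟫ - β n i)| := hω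
      _ ≤ (1 / ((S n).card : ℝ)) * (((S n).card : ℝ) * (c * ‖θhat n ω - θ‖)) := by
          refine mul_le_mul_of_nonneg_left ?_ (by positivity)
          calc ∑ i ∈ S n, |σ (⟪θhat n ω, α n i⟫ - β n i) - σ (⟪θ, α n i⟫ - β n i)|
              ≤ ∑ _i ∈ S n, c * ‖θhat n ω - θ‖ := Finset.sum_le_sum hterm
            _ = ((S n).card : ℝ) * (c * ‖θhat n ω - θ‖) := by
                rw [Finset.sum_const, nsmul_eq_mul]
      _ = c * ‖θhat n ω - θ‖ := by field_simp
  rw [tendstoInMeasure_iff_dist] at hconv ⊢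
  intro ε hε
  have hc1 : (0 : ℝ) < c + 1 := by linarith
  have hconv' := hconv (ε / (c + 1)) (by positivity)
  refine tendsto_of_tendsto_of_tendsto_of_le_of_le tendsto_const_nhds hconv'
    (fun n => zero_le) (fun n => ?_)
  refine measure_mono_ae ?_
  filter_upwards [key n] with ω hω hmem
  have h1 : ε ≤ |Ehat n ω - E n ω| := by
    simpa [Real.dist_eq, abs_abs] using (show ε ≤ dist |Ehat n ω - E n ω| 0 from hmem)
  have h2 : ε ≤ (c + 1) * ‖θhat n ω - θ‖ := by
    have : c * ‖θhat n ω - θ‖ ≤ (c + 1) * ‖θhat n ω - θ‖ :=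
      mul_le_mul_of_nonneg_right (by linarith) (norm_nonneg _)
    linarith [h1.trans hω]
  show ε / (c + 1) ≤ dist (θhat n ω) θ
  rw [dist_eq_norm, div_le_iff₀ hc1, mul_comm]
  exact h2
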